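/- Let Q be a 10-dimensional nondegenerate quadratic space over F2 of plus type (Witt index 5), and let Φ, Ψ be maximal totally singular subspaces with Φ ∩ Ψ = 0. Then in the orthogonal direct sum Q³ (with quadratic form q(a,b,c)=q(a)+q(b)+q(c)), the subspace S spanned by {(a,a,0), (0,a,a), (b,b,b) : a ∈ Φ, b ∈ Ψ} is a maximal totally singular subspace of Q³. -/

import Mathlib

open QuadraticMap Module

noncomputable def fmap (Q : Type) [AddCommGroup Q] [Module (ZMod 2) Q]
    (Φ Ψ : Submodule (ZMod 2) Q) : (Φ × Φ × Ψ) →ₗ[ZMod 2] Q × Q × Q where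
  toFun x := ((x.1 : Q) + (x.2.2 : Q), (x.1 : Q) + (x.2.1 : Q) + (x.2.2 : Q),
    (x.2.1 : Q) + (x.2.2 : Q))
  map_add' := by
    rintro ⟨a, a', b⟩ ⟨c, c', d⟩
    simp only [Prod.ext_iff, Submodule.coe_add, Prod.fst_add, Prod.snd_add]
    refine ⟨by abel, by abel, by abel⟩
  map_smul' := by
    rintro r ⟨a, a', b⟩
    simp [smul_add, Prod.ext_iff]

/-- With `Q` a 10-dimensional nondegenerate `F₂`-quadratic space of plus
type and `Φ, Ψ` maximal totally singular subspaces with `Φ ⊓ Ψ = ⊥`, the span `S` of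
`{(a,a,0), (0,a,a), (b,b,b) : a ∈ Φ, b ∈ Ψ}` is a maximal totally singular subspace of
`Q³` (with `q(a,b,c) = q a + q b + q c`); in particular it is totally singular of
dimension 15. -/
theorem stmt_0 (Q : Type) [AddCommGroup Q] [Module (ZMod 2) Q]
    (q : QuadraticForm (ZMod 2) Q)
    (hdim : Module.finrank (ZMod 2) Q = 10)
    (hnd : ∀ x : Q, (∀ y : Q, q (x + y) - q x - q y = 0) → x = 0)
    (Φ Ψ : Submodule (ZMod 2) Q)
    (hΦsing : ∀ x ∈ Φ, q x = 0) (hΨsing : ∀ x ∈ Ψ, q x = 0)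
    (hΦdim : Module.finrank (ZMod 2) Φ = 5) (hΨdim : Module.finrank (ZMod 2) Ψ = 5)
    (hΦmax : ∀ W : Submodule (ZMod 2) Q, Φ ≤ W → (∀ x ∈ W, q x = 0) → W = Φ)
    (hΨmax : ∀ W : Submodule (ZMod 2) Q, Ψ ≤ W → (∀ x ∈ W, q x = 0) → W = Ψ)
    (hint : Φ ⊓ Ψ = ⊥)
    (S : Submodule (ZMod 2) (Q × Q × Q))
    (hS : S = Submodule.span (ZMod 2)
      {p : Q × Q × Q | (∃ a ∈ Φ, p = (a, a, 0)) ∨ (∃ a ∈ Φ, p = (0, a, a)) ∨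
        (∃ b ∈ Ψ, p = (b, b, b))}) :
    (∀ u ∈ S, q u.1 + q u.2.1 + q u.2.2 = 0) ∧
    (∀ W : Submodule (ZMod 2) (Q × Q × Q), S ≤ W →
      (∀ u ∈ W, q u.1 + q u.2.1 + q u.2.2 = 0) → W = S) ∧
    Module.finrank (ZMod 2) S = 15 := by
  have hfin : FiniteDimensional (ZMod 2) Q :=
    FiniteDimensional.of_finrank_pos (by rw [hdim]; norm_num)
  have hadd2 : ∀ z : ZMod 2, z + z = 0 := by decide
  have haddQ : ∀ x : Q, x + x = 0 := by
    intro x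
    calc x + x = (2 : ZMod 2) • x := (two_smul _ x).symm
    _ = 0 := by rw [show (2 : ZMod 2) = 0 from rfl, zero_smul]
  -- q(x+y) = q x + q y + polar q x y
  have hq : ∀ x y : Q, q (x + y) = q x + q y + polar q x y := by
    intro x y; rw [polar]; ring
  -- polar vanishes on pairs from Φ, and pairs from Ψ
  have hpΦ : ∀ x ∈ Φ, ∀ y ∈ Φ, polar q x y = 0 := by
    intro x hx y hy
    rw [polar, hΦsing _ (Φ.add_mem hx hy), hΦsing _ hx, hΦsing _ hy]; ring
  have hpΨ : ∀ x ∈ Ψ, ∀ y ∈ Ψ, polar q x y = 0 := by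
    intro x hx y hy
    rw [polar, hΨsing _ (Ψ.add_mem hx hy), hΨsing _ hx, hΨsing _ hy]; ring
  -- S = range of fmap
  have hrange : S = LinearMap.range (fmap Q Φ Ψ) := by
    rw [hS]
    apply le_antisymm
    · rw [Submodule.span_le]
      rintro p (⟨a, ha, rfl⟩ | ⟨a, ha, rfl⟩ | ⟨b, hb, rfl⟩)
      · exact ⟨(⟨a, ha⟩, 0, 0), by simp [fmap]⟩
      · exact ⟨(0, ⟨a, ha⟩, 0), by simp [fmap]⟩
      · exact ⟨(0, 0, ⟨b, hb⟩), by simp [fmap]⟩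
    · rintro p ⟨⟨a, a', b⟩, rfl⟩
      have h1 : ((a : Q), (a : Q), (0 : Q)) ∈ Submodule.span (ZMod 2)
          {p : Q × Q × Q | (∃ a ∈ Φ, p = (a, a, 0)) ∨ (∃ a ∈ Φ, p = (0, a, a)) ∨
            (∃ b ∈ Ψ, p = (b, b, b))} :=
        Submodule.subset_span (Or.inl ⟨a, a.2, rfl⟩)
      have h2 : ((0 : Q), (a' : Q), (a' : Q)) ∈ Submodule.span (ZMod 2)
          {p : Q × Q × Q | (∃ a ∈ Φ, p = (a, a, 0)) ∨ (∃ a ∈ Φ, p = (0, a, a)) ∨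
            (∃ b ∈ Ψ, p = (b, b, b))} :=
        Submodule.subset_span (Or.inr (Or.inl ⟨a', a'.2, rfl⟩))
      have h3 : ((b : Q), (b : Q), (b : Q)) ∈ Submodule.span (ZMod 2)
          {p : Q × Q × Q | (∃ a ∈ Φ, p = (a, a, 0)) ∨ (∃ a ∈ Φ, p = (0, a, a)) ∨
            (∃ b ∈ Ψ, p = (b, b, b))} :=
        Submodule.subset_span (Or.inr (Or.inr ⟨b, b.2, rfl⟩))
      have hsum := Submodule.add_mem _ (Submodule.add_mem _ h1 h2) h3
      convert hsum using 1
      simp only [fmap, LinearMap.coe_mk, AddHom.coe_mk, Prod.mk_add_mk]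
      refine Prod.ext (by abel) (Prod.ext (by abel) (by abel))
  -- injectivity of fmap
  have hinj : Function.Injective (fmap Q Φ Ψ) := by
    rw [← LinearMap.ker_eq_bot, eq_bot_iff]
    rintro ⟨a, a', b⟩ h
    simp only [LinearMap.mem_ker, fmap, LinearMap.coe_mk, AddHom.coe_mk, Prod.ext_iff,
      Prod.mk_eq_zero] at h
    obtain ⟨h1, h2, h3⟩ := h
    rw [show ((0 : Q × Q × Q).1) = (0 : Q) from rfl] at h1
    rw [show ((0 : Q × Q × Q).2.1) = (0 : Q) from rfl] at h2
    rw [show ((0 : Q × Q × Q).2.2) = (0 : Q) from rfl] at h3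
    have hba : (b : Q) = (a : Q) := by
      have h4 : (a : Q) + ((a : Q) + (b : Q)) = (b : Q) := by
        rw [← add_assoc, haddQ, zero_add]
      rw [h1, add_zero] at h4
      exact h4.symm
    have hb0 : (b : Q) = 0 := by
      have : (b : Q) ∈ Φ ⊓ Ψ := ⟨hba ▸ a.2, b.2⟩
      rw [hint] at this
      exact this
    have ha0 : (a : Q) = 0 := by rw [← hba]; exact hb0
    have ha'0 : (a' : Q) = 0 := by rwa [hb0, add_zero] at h3
    simp only [Submodule.mem_bot, Prod.mk_eq_zero]
    exact ⟨Subtype.ext ha0, Subtype.ext ha'0, Subtype.ext hb0⟩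
  -- dimension of S
  have hSdim : Module.finrank (ZMod 2) S = 15 := by
    rw [hrange, LinearMap.finrank_range_of_inj hinj, Module.finrank_prod,
      Module.finrank_prod, hΦdim, hΨdim]
  -- total singularity of S
  have hSsing : ∀ u ∈ S, q u.1 + q u.2.1 + q u.2.2 = 0 := by
    intro u hu
    rw [hrange] at hu
    obtain ⟨⟨a, a', b⟩, rfl⟩ := hu
    simp only [fmap, LinearMap.coe_mk, AddHom.coe_mk]
    simp only [hq, polar_add_left, hΦsing _ a.2, hΦsing _ a'.2, hΨsing _ b.2,
      hpΦ _ a.2 _ a'.2]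
    linear_combination hadd2 (polar (⇑q) (↑a : Q) (↑b : Q)) +
      hadd2 (polar (⇑q) (↑a' : Q) (↑b : Q))
  -- the quadratic form on Q × Q × Q, and its polar bilinear form
  set q3 : QuadraticForm (ZMod 2) (Q × Q × Q) := q.prod (q.prod q) with hq3
  have hq3app : ∀ u : Q × Q × Q, q3 u = q u.1 + q u.2.1 + q u.2.2 := by
    intro u
    simp [hq3, QuadraticMap.prod_apply, add_assoc]
  set B := q3.polarBilin with hB
  have hBapp : ∀ u v : Q × Q × Q, B u v = polar q3 u v := fun _ _ => rfl
  have hBsymm : B.IsSymm := by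
    refine LinearMap.isSymm_def.mpr ?_
    intro u v
    simp only [hBapp, RingHom.id_apply]
    exact polar_comm _ _ _
  have hBrefl : B.IsRefl := hBsymm.isRefl
  have hBnd : LinearMap.BilinForm.Nondegenerate B := by
    refine hBrefl.nondegenerate_iff_separatingLeft.mpr ?_
    intro u hu
    have c1 : u.1 = 0 := by
      apply hnd
      intro y
      have := hu (y, 0, 0)
      simpa [hBapp, polar, hq3app] using this
    have c2 : u.2.1 = 0 := by
      apply hnd
      intro y
      have := hu (0, y, 0)
      simpa [hBapp, polar, hq3app] using this
    have c3 : u.2.2 = 0 := by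
      apply hnd
      intro y
      have := hu (0, 0, y)
      simpa [hBapp, polar, hq3app] using this
    exact Prod.ext c1 (Prod.ext c2 c3)
  refine ⟨hSsing, ?_, hSdim⟩
  intro W hSW hWsing
  -- W is contained in its own orthogonal complement
  have hWle : W ≤ LinearMap.BilinForm.orthogonal B W := by
    intro x hx
    rw [LinearMap.BilinForm.mem_orthogonal_iff]
    intro y hy
    show B y x = 0
    rw [hBapp, polar, hq3app, hq3app, hq3app,
      hWsing _ (W.add_mem hy hx), hWsing _ hy, hWsing _ hx]
    ring
  have hfr := LinearMap.BilinForm.finrank_add_finrank_orthogonal hBrefl W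
  rw [LinearMap.BilinForm.orthogonal_top_eq_bot (B := B) hBnd, inf_bot_eq, finrank_bot, add_zero] at hfr
  have htot : Module.finrank (ZMod 2) (Q × Q × Q) = 30 := by
    rw [Module.finrank_prod, Module.finrank_prod, hdim]
  have hWmono : Module.finrank (ZMod 2) W ≤ Module.finrank (ZMod 2) (LinearMap.BilinForm.orthogonal B W) :=
    Submodule.finrank_mono hWle
  have hW15 : Module.finrank (ZMod 2) W ≤ 15 := by omega
  have hSleW : Module.finrank (ZMod 2) S ≤ Module.finrank (ZMod 2) W :=
    Submodule.finrank_mono hSW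
  exact (Submodule.eq_of_le_of_finrank_eq hSW (by omega)).symm
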